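/- With the weighted word length l on a countable discrete group Γ as above, the spheres ∂(e,n) = {g : l(g) = n} satisfy |∂(e,n)| ≤ 2·3^{n−1} for every n ∈ ℕ, via the inclusion ∂(e,n) ⊆ ⋃_{k=1}^{n} Z_k · ∂(e, n−k). -/

import Mathlib

open Pointwise

section Aux

variable {Γ : Type*} [Group Γ]

/-- Product of a word. -/
def wProd (x : ℕ → Γ) (L : List (ℕ × Bool)) : Γ :=
  (L.map fun p => if p.2 then x p.1 else (x p.1)⁻¹).prod

/-- Set of weights of factorizations of `g`. -/
def wSet (x : ℕ → Γ) (g : Γ) : Set ℕ :=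
  {m | ∃ L : List (ℕ × Bool), (∀ p ∈ L, 1 ≤ p.1) ∧ wProd x L = g ∧ m = (L.map Prod.fst).sum}

lemma wProd_cons (x : ℕ → Γ) (p : ℕ × Bool) (L : List (ℕ × Bool)) :
    wProd x (p :: L) = (if p.2 then x p.1 else (x p.1)⁻¹) * wProd x L := by
  simp [wProd]

lemma wProd_append (x : ℕ → Γ) (L M : List (ℕ × Bool)) :
    wProd x (L ++ M) = wProd x L * wProd x M := by
  simp [wProd]

lemma wProd_revflip (x : ℕ → Γ) (L : List (ℕ × Bool)) :
    wProd x (L.reverse.map fun p => (p.1, !p.2)) = (wProd x L)⁻¹ := by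
  induction L with
  | nil => simp [wProd]
  | cons p t ih =>
      rw [wProd_cons, mul_inv_rev]
      simp only [List.reverse_cons, List.map_append, List.map_cons, List.map_nil]
      rw [show (t.reverse.map fun p => (p.1, !p.2)) ++ [(p.1, !p.2)] =
        (t.reverse.map fun p => (p.1, !p.2)) ++ [(p.1, !p.2)] from rfl, wProd_append, ih]
      congr 1
      cases p.2 <;> simp [wProd]

lemma wSet_one (x : ℕ → Γ) : 0 ∈ wSet x 1 :=
  ⟨[], by simp, by simp [wProd], by simp⟩

lemma wSet_mul (x : ℕ → Γ) {g h : Γ} {a b : ℕ} (ha : a ∈ wSet x g) (hb : b ∈ wSet x h) :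
    a + b ∈ wSet x (g * h) := by
  obtain ⟨L, hL1, hL2, hL3⟩ := ha
  obtain ⟨M, hM1, hM2, hM3⟩ := hb
  refine ⟨L ++ M, ?_, ?_, ?_⟩
  · intro p hp; rcases List.mem_append.1 hp with h' | h'
    · exact hL1 p h'
    · exact hM1 p h'
  · rw [wProd_append, hL2, hM2]
  · simp [hL3, hM3]

lemma wSet_inv (x : ℕ → Γ) {g : Γ} {a : ℕ} (ha : a ∈ wSet x g) : a ∈ wSet x g⁻¹ := by
  obtain ⟨L, hL1, hL2, hL3⟩ := ha
  refine ⟨L.reverse.map fun p => (p.1, !p.2), ?_, ?_, ?_⟩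
  · intro p hp
    simp only [List.mem_map, List.mem_reverse] at hp
    obtain ⟨q, hq, rfl⟩ := hp
    exact hL1 q hq
  · rw [wProd_revflip, hL2]
  · rw [hL3]
    rw [List.map_map]
    have : (Prod.fst ∘ fun p : ℕ × Bool => (p.1, !p.2)) = Prod.fst := rfl
    rw [this, List.map_reverse, List.sum_reverse]

lemma wSet_nonempty (x : ℕ → Γ) (S : Set Γ)
    (hS : S = {g : Γ | ∃ m : ℕ, 1 ≤ m ∧ (g = x m ∨ g = (x m)⁻¹)})
    (hSgen : Subgroup.closure S = ⊤) (g : Γ) : (wSet x g).Nonempty := by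
  have hg : g ∈ Subgroup.closure S := by rw [hSgen]; trivial
  induction hg using Subgroup.closure_induction with
  | mem y hy =>
      rw [hS] at hy
      obtain ⟨m, hm, hy | hy⟩ := hy
      · exact ⟨m, [(m, true)], by simpa using hm, by simp [wProd, hy], by simp⟩
      · exact ⟨m, [(m, false)], by simpa using hm, by simp [wProd, hy], by simp⟩
  | one => exact ⟨0, wSet_one x⟩
  | mul y z _ _ hy hz =>
      obtain ⟨a, ha⟩ := hy; obtain ⟨b, hb⟩ := hz
      exact ⟨a + b, wSet_mul x ha hb⟩
  | inv y _ hy =>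
      obtain ⟨a, ha⟩ := hy
      exact ⟨a, wSet_inv x ha⟩

/-- The natural-number valued word length. -/
noncomputable def lval (x : ℕ → Γ) (g : Γ) : ℕ := sInf (wSet x g)

lemma lval_one (x : ℕ → Γ) : lval x 1 = 0 :=
  Nat.sInf_eq_zero.2 (Or.inl (wSet_one x))

lemma one_le_lval (x : ℕ → Γ) {g : Γ} (hne : (wSet x g).Nonempty) (hg : g ≠ 1) :
    1 ≤ lval x g := by
  obtain ⟨L, hL1, hL2, hL3⟩ := Nat.sInf_mem hne
  cases L with
  | nil => exact absurd hL2.symm (by simpa [wProd] using hg)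
  | cons p t =>
      have h1 : 1 ≤ p.1 := hL1 p (by simp)
      have : p.1 ≤ (List.map Prod.fst (p :: t)).sum := by
        simp only [List.map_cons, List.sum_cons]; omega
      rw [lval, hL3]; omega


lemma sum_geom_bound (n : ℕ) (hn : 1 ≤ n) :
    ∑ k ∈ Finset.Icc 1 n, 2 * (if n - k = 0 then 1 else 2 * 3 ^ (n - k - 1))
      = 2 * 3 ^ (n - 1) := by
  have hre : ∑ k ∈ Finset.Icc 1 n, 2 * (if n - k = 0 then 1 else 2 * 3 ^ (n - k - 1))
      = ∑ j ∈ Finset.range n, 2 * (if j = 0 then 1 else 2 * 3 ^ (j - 1)) := by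
    apply Finset.sum_nbij' (fun k => n - k) (fun j => n - j)
    · intro a ha
      obtain ⟨h1, h2⟩ := Finset.mem_Icc.1 ha
      exact Finset.mem_range.2 (by omega)
    · intro a ha
      have := Finset.mem_range.1 ha
      exact Finset.mem_Icc.2 ⟨by omega, by omega⟩
    · intro a ha
      obtain ⟨h1, h2⟩ := Finset.mem_Icc.1 ha
      omega
    · intro a ha
      have := Finset.mem_range.1 ha
      omega
    · intro a ha; rfl
  rw [hre]
  clear hre
  induction n, hn using Nat.le_induction with
  | base => simp
  | succ n hn ih =>
      rw [Finset.sum_range_succ, ih, if_neg (by omega)]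
      have h1 : n - 1 + 1 = n := by omega
      have h3 : (3:ℕ) ^ n = 3 ^ (n - 1) * 3 := by rw [← pow_succ, h1]
      have h2 : n + 1 - 1 = n := by omega
      rw [h2, h3]
      ring

lemma lval_decomp (x : ℕ → Γ) (hne : ∀ g : Γ, (wSet x g).Nonempty) {g : Γ} (hg : g ≠ 1) :
    ∃ k h, 1 ≤ k ∧ k ≤ lval x g ∧ lval x h = lval x g - k ∧
      (g = x k * h ∨ g = (x k)⁻¹ * h) := by
  obtain ⟨L, hL1, hL2, hL3⟩ := Nat.sInf_mem (hne g)
  cases L with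
  | nil => exact absurd hL2.symm (by simpa [wProd] using hg)
  | cons p t =>
      set h := wProd x t with hh
      have hk1 : 1 ≤ p.1 := hL1 p (by simp)
      have hsum : lval x g = p.1 + (t.map Prod.fst).sum := by
        simpa [lval] using hL3
      have ht_mem : (t.map Prod.fst).sum ∈ wSet x h :=
        ⟨t, fun q hq => hL1 q (by simp [hq]), rfl, rfl⟩
      have h_le : lval x h ≤ (t.map Prod.fst).sum := Nat.sInf_le ht_mem
      have h_ge : lval x g ≤ p.1 + lval x h := by
        obtain ⟨M, hM1, hM2, hM3⟩ := Nat.sInf_mem (hne h)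
        refine Nat.sInf_le ⟨p :: M, ?_, ?_, ?_⟩
        · intro q hq
          rcases List.mem_cons.1 hq with rfl | hq
          · exact hk1
          · exact hM1 q hq
        · rw [wProd_cons, hM2]
          rw [wProd_cons] at hL2
          exact hL2
        · simp only [List.map_cons, List.sum_cons]
          exact congrArg (p.1 + ·) hM3
      have hcase : g = x p.1 * h ∨ g = (x p.1)⁻¹ * h := by
        rw [wProd_cons] at hL2
        cases hb : p.2
        · right; rw [← hL2, hb]; simp [hh]
        · left; rw [← hL2, hb]; simp [hh]
      exact ⟨p.1, h, hk1, by omega, by omega, hcase⟩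

lemma ncard_biUnion_le {α ι : Type*} (s : Finset ι) (f : ι → Set α) :
    (⋃ i ∈ s, f i).ncard ≤ ∑ i ∈ s, (f i).ncard := by
  classical
  induction s using Finset.induction with
  | empty => simp
  | insert a s hnotmem ih =>
      rw [Finset.set_biUnion_insert, Finset.sum_insert hnotmem]
      exact le_trans (Set.ncard_union_le _ _) (by omega)

lemma sphere_subset (x : ℕ → Γ) (hne : ∀ g : Γ, (wSet x g).Nonempty) {n : ℕ} (hn : 1 ≤ n) :
    {g : Γ | lval x g = n} ⊆
      ⋃ k ∈ Finset.Icc 1 n, ({x k, (x k)⁻¹} : Set Γ) * {g : Γ | lval x g = n - k} := by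
  intro g hg
  have hgn : lval x g = n := hg
  have hg1 : g ≠ 1 := by
    intro h; rw [h, lval_one] at hgn; omega
  obtain ⟨k, h, hk1, hk2, hlh, hcase⟩ := lval_decomp x hne hg1
  rw [hgn] at hk2 hlh
  simp only [Set.mem_iUnion, exists_prop]
  refine ⟨k, Finset.mem_Icc.2 ⟨hk1, hk2⟩, ?_⟩
  rcases hcase with rfl | rfl
  · exact Set.mul_mem_mul (by simp) hlh
  · exact Set.mul_mem_mul (by simp) hlh

lemma pair_mul_ncard (a b : Γ) (T : Set Γ) :
    (({a, b} : Set Γ) * T).ncard ≤ 2 * T.ncard := by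
  have : ({a, b} : Set Γ) * T = a • T ∪ b • T := by
    rw [show ({a, b} : Set Γ) = {a} ∪ {b} by rfl, Set.union_mul, Set.singleton_mul,
      Set.singleton_mul]
    rfl
  rw [this]
  calc (a • T ∪ b • T).ncard ≤ (a • T).ncard + (b • T).ncard := Set.ncard_union_le _ _
    _ = 2 * T.ncard := by rw [Set.ncard_smul_set, Set.ncard_smul_set]; omega

lemma sphere_finite_card (x : ℕ → Γ) (hne : ∀ g : Γ, (wSet x g).Nonempty) :
    ∀ n : ℕ, ({g : Γ | lval x g = n}).Finite ∧
      ({g : Γ | lval x g = n}).ncard ≤ if n = 0 then 1 else 2 * 3 ^ (n - 1) := by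
  intro n
  induction n using Nat.strong_induction_on with
  | _ n ih =>
    rcases Nat.eq_zero_or_pos n with rfl | hn
    · have h0 : {g : Γ | lval x g = 0} = {1} := by
        ext g
        simp only [Set.mem_setOf_eq, Set.mem_singleton_iff]
        constructor
        · intro h
          by_contra hg
          have := one_le_lval x (hne g) hg
          omega
        · rintro rfl; exact lval_one x
      rw [h0]
      simp
    · have hsub := sphere_subset x hne hn
      have hfin : ∀ k ∈ Finset.Icc 1 n,
          (({x k, (x k)⁻¹} : Set Γ) * {g : Γ | lval x g = n - k}).Finite := by
        intro k hk
        obtain ⟨hk1, hk2⟩ := Finset.mem_Icc.1 hk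
        exact Set.Finite.mul (Set.toFinite _) (ih (n - k) (by omega)).1
      have hUfin : (⋃ k ∈ Finset.Icc 1 n,
          ({x k, (x k)⁻¹} : Set Γ) * {g : Γ | lval x g = n - k}).Finite :=
        Set.Finite.biUnion (Finset.Icc 1 n).finite_toSet hfin
      refine ⟨hUfin.subset hsub, ?_⟩
      rw [if_neg (by omega)]
      calc ({g : Γ | lval x g = n}).ncard
          ≤ (⋃ k ∈ Finset.Icc 1 n,
              ({x k, (x k)⁻¹} : Set Γ) * {g : Γ | lval x g = n - k}).ncard :=
            Set.ncard_le_ncard hsub hUfin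
        _ ≤ ∑ k ∈ Finset.Icc 1 n,
              (({x k, (x k)⁻¹} : Set Γ) * {g : Γ | lval x g = n - k}).ncard :=
            ncard_biUnion_le _ _
        _ ≤ ∑ k ∈ Finset.Icc 1 n,
              2 * (if n - k = 0 then 1 else 2 * 3 ^ (n - k - 1)) := by
            apply Finset.sum_le_sum
            intro k hk
            obtain ⟨hk1, hk2⟩ := Finset.mem_Icc.1 hk
            calc (({x k, (x k)⁻¹} : Set Γ) * {g : Γ | lval x g = n - k}).ncard
                ≤ 2 * ({g : Γ | lval x g = n - k}).ncard := pair_mul_ncard _ _ _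
              _ ≤ 2 * (if n - k = 0 then 1 else 2 * 3 ^ (n - k - 1)) :=
                  Nat.mul_le_mul_left 2 (ih (n - k) (by omega)).2
        _ = 2 * 3 ^ (n - 1) := sum_geom_bound n hn


end Aux

/-- With the weighted word length `l` on a countable discrete group `Γ` generated
by an infinite symmetric set `S = ⋃ Z_k`, `Z_k = {x_k, x_k⁻¹}`, with weights
`l₀(x_k) = k`: the spheres `∂(e,n) = {g : l(g) = n}` satisfy
`∂(e,n) ⊆ ⋃_{k=1}^n Z_k · ∂(e, n−k)` and `|∂(e,n)| ≤ 2·3^{n−1}` for all `n ≥ 1`. -/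
theorem stmt16 {Γ : Type*} [Group Γ] [Countable Γ] [DecidableEq Γ]
    (x : ℕ → Γ)
    (S : Set Γ) (hS : S = {g : Γ | ∃ m : ℕ, 1 ≤ m ∧ (g = x m ∨ g = (x m)⁻¹)})
    (hSe : (1 : Γ) ∉ S)
    (hSinf : S.Infinite)
    (hSgen : Subgroup.closure S = ⊤)
    (l : Γ → ℝ)
    (hl : ∀ g : Γ, l g = if g = 1 then 0 else
      sInf {r : ℝ | ∃ L : List (ℕ × Bool), (∀ p ∈ L, 1 ≤ p.1) ∧
        (L.map fun p => if p.2 then x p.1 else (x p.1)⁻¹).prod = g ∧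
        r = (L.map fun p => (p.1 : ℝ)).sum}) :
    ∀ n : ℕ, 1 ≤ n →
      ({g : Γ | l g = (n : ℝ)} ⊆
        ⋃ k ∈ Finset.Icc 1 n, ({x k, (x k)⁻¹} : Set Γ) * {g : Γ | l g = ((n - k : ℕ) : ℝ)}) ∧
      ({g : Γ | l g = (n : ℝ)}).ncard ≤ 2 * 3 ^ (n - 1) := by
  have hne : ∀ g : Γ, (wSet x g).Nonempty := wSet_nonempty x S hS hSgen
  -- l g = lval g
  have hleq : ∀ g : Γ, l g = (lval x g : ℝ) := by
    intro g
    rw [hl g]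
    by_cases hg1 : g = 1
    · simp [hg1, lval_one]
    · rw [if_neg hg1]
      have hEq : {r : ℝ | ∃ L : List (ℕ × Bool), (∀ p ∈ L, 1 ≤ p.1) ∧
          (L.map fun p => if p.2 then x p.1 else (x p.1)⁻¹).prod = g ∧
          r = (L.map fun p => (p.1 : ℝ)).sum} = (Nat.cast : ℕ → ℝ) '' wSet x g := by
        ext r
        constructor
        · rintro ⟨L, h1, h2, rfl⟩
          refine ⟨(L.map Prod.fst).sum, ⟨L, h1, h2, rfl⟩, ?_⟩
          rw [Nat.cast_list_sum, List.map_map]; rfl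
        · rintro ⟨m, ⟨L, h1, h2, h3⟩, rfl⟩
          refine ⟨L, h1, h2, ?_⟩
          rw [h3, Nat.cast_list_sum, List.map_map]; rfl
      rw [hEq]
      have hmem : lval x g ∈ wSet x g := Nat.sInf_mem (hne g)
      apply le_antisymm
      · exact csInf_le ⟨0, by rintro r ⟨m, _, rfl⟩; positivity⟩ ⟨_, hmem, rfl⟩
      · apply le_csInf ((hne g).image _)
        rintro r ⟨m, hm, rfl⟩
        exact_mod_cast Nat.sInf_le hm
  -- spheres in terms of lval
  have hset : ∀ m : ℕ, {g : Γ | l g = (m : ℝ)} = {g : Γ | lval x g = m} := by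
    intro m
    ext g
    simp only [Set.mem_setOf_eq, hleq g, Nat.cast_inj]
  intro n hn
  constructor
  · rw [hset]
    simp only [hset]
    exact sphere_subset x hne hn
  · rw [hset]
    have := (sphere_finite_card x hne n).2
    rwa [if_neg (by omega)] at this
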